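/- Let S and T be real symmetric d×d matrices with T = S + E where ‖E‖ ≤ ε (spectral norm), S positive semidefinite with rank(S) ≤ n. Let T' = (T - εI)₊ be the Frobenius projection of T - εI onto the PSD cone. Then rank(T') ≤ n, ‖T' - S‖ ≤ 2ε, and ‖T' - S‖_F ≤ 2ε√(2n). -/

import Mathlib

set_option maxHeartbeats 1000000

open Matrix
open scoped Kronecker

noncomputable def specNorm {m n : Type*} [Fintype m] [Fintype n] [DecidableEq n]
    (M : Matrix m n ℝ) : ℝ :=
  ‖LinearMap.toContinuousLinearMap (Matrix.toEuclideanLin M)‖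

noncomputable def frobNorm {m n : Type*} [Fintype m] [Fintype n]
    (M : Matrix m n ℝ) : ℝ :=
  Real.sqrt (∑ i, ∑ j, (M i j) ^ 2)

section Helpers

variable {d : ℕ}

lemma norm_mulVec_le (M : Matrix (Fin d) (Fin d) ℝ) (x : Fin d → ℝ) :
    ‖(WithLp.equiv 2 (Fin d → ℝ)).symm (M *ᵥ x)‖ ≤
      specNorm M * ‖(WithLp.equiv 2 (Fin d → ℝ)).symm x‖ :=
  (LinearMap.toContinuousLinearMap (Matrix.toEuclideanLin M)).le_opNorm
    ((WithLp.equiv 2 (Fin d → ℝ)).symm x)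

lemma norm_sq_eq_dot (x : Fin d → ℝ) :
    ‖(WithLp.equiv 2 (Fin d → ℝ)).symm x‖ ^ 2 = x ⬝ᵥ x := by
  rw [← real_inner_self_eq_norm_sq]
  simp [PiLp.inner_apply, dotProduct]
  rw [EuclideanSpace.norm_eq, Real.sq_sqrt (by positivity)]
  simp [sq]

lemma quad_abs_le (M : Matrix (Fin d) (Fin d) ℝ) (x : Fin d → ℝ) :
    |x ⬝ᵥ (M *ᵥ x)| ≤ specNorm M * (x ⬝ᵥ x) := by
  have hi : x ⬝ᵥ (M *ᵥ x) =
      (inner ℝ ((WithLp.equiv 2 (Fin d → ℝ)).symm x)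
        ((WithLp.equiv 2 (Fin d → ℝ)).symm (M *ᵥ x)) : ℝ) := by
    simp [PiLp.inner_apply, dotProduct, mul_comm]
  rw [hi]
  have h1 := abs_real_inner_le_norm ((WithLp.equiv 2 (Fin d → ℝ)).symm x)
    ((WithLp.equiv 2 (Fin d → ℝ)).symm (M *ᵥ x))
  have h2 := norm_mulVec_le M x
  have h3 := norm_sq_eq_dot (d := d) x
  have h4 := mul_le_mul_of_nonneg_left h2 (norm_nonneg ((WithLp.equiv 2 (Fin d → ℝ)).symm x))
  have h5 : ‖(WithLp.equiv 2 (Fin d → ℝ)).symm x‖ * (specNorm M * ‖(WithLp.equiv 2 (Fin d → ℝ)).symm x‖)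
      = specNorm M * (x ⬝ᵥ x) := by rw [← h3]; ring
  linarith

lemma specNorm_le_of_quad (M : Matrix (Fin d) (Fin d) ℝ) (hM : M.IsSymm) {c : ℝ} (hc : 0 ≤ c)
    (h : ∀ x, |x ⬝ᵥ (M *ᵥ x)| ≤ c * (x ⬝ᵥ x)) : specNorm M ≤ c := by
  have hsymm : ∀ a b : Fin d → ℝ, a ⬝ᵥ (M *ᵥ b) = b ⬝ᵥ (M *ᵥ a) := by
    intro a b
    rw [dotProduct_mulVec, ← Matrix.mulVec_transpose, hM.eq, dotProduct_comm]
  rw [specNorm]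
  apply ContinuousLinearMap.opNorm_le_bound _ hc
  intro v
  set x : Fin d → ℝ := (WithLp.equiv 2 (Fin d → ℝ)) v with hxdef
  show ‖(WithLp.equiv 2 (Fin d → ℝ)).symm (M *ᵥ x)‖ ≤ c * ‖(WithLp.equiv 2 (Fin d → ℝ)).symm x‖
  set y : Fin d → ℝ := M *ᵥ x with hydef
  set nx : ℝ := ‖(WithLp.equiv 2 (Fin d → ℝ)).symm x‖ with hnx
  set ny : ℝ := ‖(WithLp.equiv 2 (Fin d → ℝ)).symm y‖ with hny
  have hxx : x ⬝ᵥ x = nx ^ 2 := (norm_sq_eq_dot x).symm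
  have hyy : y ⬝ᵥ y = ny ^ 2 := (norm_sq_eq_dot y).symm
  rcases eq_or_lt_of_le (norm_nonneg ((WithLp.equiv 2 (Fin d → ℝ)).symm y)) with h0 | hny0
  · have : ny = 0 := h0.symm
    rw [this]; positivity
  rcases eq_or_lt_of_le (norm_nonneg ((WithLp.equiv 2 (Fin d → ℝ)).symm x)) with h0 | hnx0
  · exfalso
    have : x = 0 := by
      have := norm_eq_zero.mp (hnx.trans h0.symm ▸ h0.symm : nx = 0)
      simpa using congrArg (WithLp.equiv 2 (Fin d → ℝ)) this
    rw [hydef, this, Matrix.mulVec_zero] at hny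
    simp at hny
    exact absurd hny (by linarith)
  set t : ℝ := nx / ny with ht
  have hMy : x ⬝ᵥ (M *ᵥ y) = y ⬝ᵥ y := by rw [hsymm x y]
  have hxy : x ⬝ᵥ y = y ⬝ᵥ x := dotProduct_comm x y
  have e1 : (x + t • y) ⬝ᵥ (M *ᵥ (x + t • y)) - (x - t • y) ⬝ᵥ (M *ᵥ (x - t • y))
      = 4 * t * (y ⬝ᵥ y) := by
    simp only [Matrix.mulVec_add, Matrix.mulVec_sub, Matrix.mulVec_smul, dotProduct_add,
      dotProduct_sub, add_dotProduct, sub_dotProduct, smul_dotProduct, dotProduct_smul,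
      smul_eq_mul]
    have hyMx : y ⬝ᵥ (M *ᵥ x) = y ⬝ᵥ y := rfl
    linear_combination 2 * t * hMy + 2 * t * hyMx
  have e2 : (x + t • y) ⬝ᵥ (x + t • y) + (x - t • y) ⬝ᵥ (x - t • y)
      = 2 * (x ⬝ᵥ x) + 2 * t ^ 2 * (y ⬝ᵥ y) := by
    simp only [dotProduct_add, dotProduct_sub, add_dotProduct, sub_dotProduct,
      smul_dotProduct, dotProduct_smul, smul_eq_mul]
    linear_combination 0 * hxy
  have b1 := (abs_le.mp (h (x + t • y))).2
  have b2 := (abs_le.mp (h (x - t • y))).1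
  have key : 4 * t * (y ⬝ᵥ y) ≤ c * (2 * (x ⬝ᵥ x) + 2 * t ^ 2 * (y ⬝ᵥ y)) := by
    rw [← e2]; linarith [e1]
  have ht1 : t * (y ⬝ᵥ y) = nx * ny := by rw [hyy, ht]; field_simp
  have ht2 : t ^ 2 * (y ⬝ᵥ y) = nx ^ 2 := by rw [hyy, ht]; field_simp; exact mul_div_cancel_right₀ _ (ne_of_gt hny0)
  nlinarith [key, ht1, ht2, hnx0, hny0]

lemma sum_mulVec' {k : Type*} [Fintype k] (A : k → Matrix (Fin d) (Fin d) ℝ) (x : Fin d → ℝ) :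
    (∑ i, A i) *ᵥ x = ∑ i, A i *ᵥ x := by
  ext j
  simp only [Matrix.mulVec, dotProduct, Matrix.sum_apply, Finset.sum_apply, Finset.sum_mul]
  rw [Finset.sum_comm]

lemma dot_sum' {k : Type*} [Fintype k] (x : Fin d → ℝ) (y : k → Fin d → ℝ) :
    x ⬝ᵥ (∑ i, y i) = ∑ i, x ⬝ᵥ y i := by
  simp only [dotProduct, Finset.sum_apply, Finset.mul_sum]
  rw [Finset.sum_comm]

lemma vecMulVec_mulVec' (u v x : Fin d → ℝ) :
    vecMulVec u v *ᵥ x = (v ⬝ᵥ x) • u := by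
  ext i
  simp [vecMulVec_apply, Matrix.mulVec, dotProduct, Finset.mul_sum, mul_assoc, mul_comm,
    mul_left_comm]

lemma quad_sum_outer (a : Fin d → ℝ) (w : Fin d → Fin d → ℝ) (x : Fin d → ℝ) :
    x ⬝ᵥ ((∑ i, a i • vecMulVec (w i) (w i)) *ᵥ x) = ∑ i, a i * (w i ⬝ᵥ x) ^ 2 := by
  rw [sum_mulVec', dot_sum']
  congr 1; ext i
  rw [Matrix.smul_mulVec, vecMulVec_mulVec', dotProduct_smul, dotProduct_smul]
  simp only [smul_eq_mul, dotProduct_comm x (w i), sq]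

lemma parseval (w : Fin d → Fin d → ℝ)
    (horth : ∀ i j, w i ⬝ᵥ w j = if i = j then (1 : ℝ) else 0) (x : Fin d → ℝ) :
    ∑ i, (w i ⬝ᵥ x) ^ 2 = x ⬝ᵥ x := by
  have h1 : (Matrix.of w) * (Matrix.of w)ᵀ = 1 := by
    ext i j
    simpa [Matrix.mul_apply, dotProduct, Matrix.one_apply] using horth i j
  have h2 : (Matrix.of w)ᵀ * (Matrix.of w) = 1 := mul_eq_one_comm.mp h1
  have h3 : ∑ i, (w i ⬝ᵥ x) ^ 2 = (Matrix.of w *ᵥ x) ⬝ᵥ (Matrix.of w *ᵥ x) := by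
    simp [dotProduct, Matrix.mulVec, sq]
  have h4 : (Matrix.of w *ᵥ x) ᵥ* (Matrix.of w) = x := by
    conv_lhs => rw [← Matrix.transpose_transpose (Matrix.of w), Matrix.vecMul_transpose,
      Matrix.mulVec_mulVec, Matrix.transpose_transpose, h2, Matrix.one_mulVec]
  rw [h3, Matrix.dotProduct_mulVec, h4]

lemma isSymm_of_isHermitian {A : Matrix (Fin d) (Fin d) ℝ} (h : A.IsHermitian) : A.IsSymm := by
  ext i j
  conv_rhs => rw [← h]
  simp [Matrix.conjTranspose_apply, Matrix.transpose_apply]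

lemma isHermitian_of_isSymm {A : Matrix (Fin d) (Fin d) ℝ} (h : A.IsSymm) : A.IsHermitian := by
  ext i j
  conv_rhs => rw [← h.eq]
  simp [Matrix.conjTranspose_apply, Matrix.transpose_apply]

lemma rank_sub_le' (A B : Matrix (Fin d) (Fin d) ℝ) : (A - B).rank ≤ A.rank + B.rank := by
  have hsub : LinearMap.range (A - B).mulVecLin ≤
      LinearMap.range A.mulVecLin ⊔ LinearMap.range B.mulVecLin := by
    rintro y ⟨x, rfl⟩
    have : (A - B).mulVecLin x = A.mulVecLin x - B.mulVecLin x := by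
      simp [Matrix.mulVecLin_apply, Matrix.sub_mulVec]
    rw [this]
    exact Submodule.sub_mem _ (Submodule.mem_sup_left (LinearMap.mem_range_self _ x))
      (Submodule.mem_sup_right (LinearMap.mem_range_self _ x))
  calc (A - B).rank ≤ Module.finrank ℝ
        ↥(LinearMap.range A.mulVecLin ⊔ LinearMap.range B.mulVecLin) :=
        Submodule.finrank_mono hsub
    _ ≤ A.rank + B.rank := Submodule.finrank_add_le_finrank_add_finrank _ _

lemma eig_abs_le (D : Matrix (Fin d) (Fin d) ℝ) (hD : D.IsHermitian) (i : Fin d) :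
    |hD.eigenvalues i| ≤ specNorm D := by
  set v : EuclideanSpace ℝ (Fin d) := hD.eigenvectorBasis i with hv
  have hnv : ‖v‖ = 1 := hD.eigenvectorBasis.orthonormal.1 i
  have hmul : D *ᵥ (WithLp.equiv 2 (Fin d → ℝ)) v
      = hD.eigenvalues i • (WithLp.equiv 2 (Fin d → ℝ)) v := hD.mulVec_eigenvectorBasis i
  have h1 := norm_mulVec_le D ((WithLp.equiv 2 (Fin d → ℝ)) v)
  rw [hmul] at h1
  have h2 : (WithLp.equiv 2 (Fin d → ℝ)).symm
      (hD.eigenvalues i • (WithLp.equiv 2 (Fin d → ℝ)) v) = hD.eigenvalues i • v := by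
    apply (WithLp.equiv 2 (Fin d → ℝ)).injective
    simp
  have h3 : (WithLp.equiv 2 (Fin d → ℝ)).symm ((WithLp.equiv 2 (Fin d → ℝ)) v) = v :=
    (WithLp.equiv 2 (Fin d → ℝ)).symm_apply_apply v
  rw [h2, h3, norm_smul, hnv] at h1
  simpa using h1

lemma frob_sq_eq_sum_eig_sq (D : Matrix (Fin d) (Fin d) ℝ) (hD : D.IsHermitian) :
    ∑ i, ∑ j, (D i j) ^ 2 = ∑ i, hD.eigenvalues i ^ 2 := by
  set V : Matrix (Fin d) (Fin d) ℝ := (hD.eigenvectorUnitary : Matrix (Fin d) (Fin d) ℝ) with hV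
  set Λ : Matrix (Fin d) (Fin d) ℝ :=
    Matrix.diagonal (RCLike.ofReal ∘ hD.eigenvalues) with hΛ
  have hVs : star V * V = 1 := Unitary.coe_star_mul_self hD.eigenvectorUnitary
  have hDD : D * D = V * (Λ * Λ) * star V := by
    conv_lhs => rw [hD.spectral_theorem, Unitary.conjStarAlgAut_apply]
    rw [Matrix.mul_assoc (V * Λ) (star V) (V * Λ * star V),
      ← Matrix.mul_assoc (star V) (V * Λ) (star V),
      ← Matrix.mul_assoc (star V) V Λ, hVs, Matrix.one_mul]
    simp only [Matrix.mul_assoc]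
  have htr : (D * D).trace = ∑ i, hD.eigenvalues i ^ 2 := by
    rw [hDD, Matrix.trace_mul_cycle, ← Matrix.mul_assoc, hVs, Matrix.one_mul,
      Matrix.diagonal_mul_diagonal, Matrix.trace_diagonal]
    simp [sq, RCLike.ofReal_real_eq_id]
  have hsym : ∀ i j, D j i = D i j := by
    intro i j
    conv_lhs => rw [← hD.eq]
    simp [Matrix.conjTranspose_apply]
  rw [← htr, Matrix.trace, Finset.sum_congr rfl]
  intro i _
  rw [Matrix.diag, Matrix.mul_apply, Finset.sum_congr rfl]
  intro j _
  rw [hsym i j, sq]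

end Helpers

/-- Truncating the eigenvalues of `T = S + E` below `ε` yields a matrix of rank at most
`rank S` that is `2ε`-close to `S` in spectral norm and `2ε√(2n)`-close in Frobenius
norm. -/
theorem eigenvalue_truncation_close {d n : ℕ}
    (S E T T' : Matrix (Fin d) (Fin d) ℝ) (ε : ℝ)
    (hT : T = S + E) (hS : S.PosSemidef) (hrank : S.rank ≤ n)
    (hEsym : E.IsSymm) (hEnorm : specNorm E ≤ ε)
    (μ : Fin d → ℝ) (w : Fin d → Fin d → ℝ)
    (horth : ∀ i j, w i ⬝ᵥ w j = if i = j then (1 : ℝ) else 0)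
    (hdecomp : T - ε • (1 : Matrix (Fin d) (Fin d) ℝ) =
      ∑ i, μ i • Matrix.vecMulVec (w i) (w i))
    (hT' : T' = ∑ i, (max (μ i) 0) • Matrix.vecMulVec (w i) (w i)) :
    T'.rank ≤ n ∧ specNorm (T' - S) ≤ 2 * ε ∧
      frobNorm (T' - S) ≤ 2 * ε * Real.sqrt (2 * n) := by
  classical
  have hε0 : 0 ≤ ε := le_trans (norm_nonneg _) hEnorm
  have hdot_nonneg : ∀ x : Fin d → ℝ, (0:ℝ) ≤ x ⬝ᵥ x := fun x =>
    Finset.sum_nonneg fun i _ => mul_self_nonneg _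
  have qS : ∀ x : Fin d → ℝ, 0 ≤ x ⬝ᵥ (S *ᵥ x) := fun x => by
    have := hS.dotProduct_mulVec_nonneg x
    simpa using this
  have qE : ∀ x : Fin d → ℝ, |x ⬝ᵥ (E *ᵥ x)| ≤ ε * (x ⬝ᵥ x) := fun x =>
    le_trans (quad_abs_le E x) (mul_le_mul_of_nonneg_right hEnorm (hdot_nonneg x))
  have qdec : ∀ x : Fin d → ℝ, ∑ i, μ i * (w i ⬝ᵥ x) ^ 2
      = x ⬝ᵥ (S *ᵥ x) + x ⬝ᵥ (E *ᵥ x) - ε * (x ⬝ᵥ x) := by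
    intro x
    have h := congrArg (fun M : Matrix (Fin d) (Fin d) ℝ => x ⬝ᵥ (M *ᵥ x)) hdecomp
    rw [quad_sum_outer] at h
    rw [← h, hT]
    simp only [Matrix.sub_mulVec, Matrix.add_mulVec, Matrix.smul_mulVec,
      Matrix.one_mulVec, dotProduct_sub, dotProduct_add, dotProduct_smul, smul_eq_mul]
  have hw1 : ∀ i, w i ⬝ᵥ w i = 1 := fun i => by simpa using horth i i
  have hcollapse : ∀ (a : Fin d → ℝ) (i : Fin d),
      ∑ j, a j * (w j ⬝ᵥ w i) ^ 2 = a i := by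
    intro a i
    have hterm : ∀ j, a j * (w j ⬝ᵥ w i) ^ 2 = if j = i then a j else 0 := by
      intro j
      rw [horth j i]
      by_cases h : j = i <;> simp [h]
    simp only [hterm]
    simp
  have hμlb : ∀ i, -(2 * ε) ≤ μ i := by
    intro i
    have h := qdec (w i)
    rw [hcollapse μ i, hw1 i] at h
    have h1 := qS (w i)
    have h2 := (abs_le.mp (qE (w i))).1
    rw [hw1 i] at h2
    linarith
  -- quadratic form of T'
  have qT' : ∀ x : Fin d → ℝ, x ⬝ᵥ (T' *ᵥ x) = ∑ i, max (μ i) 0 * (w i ⬝ᵥ x) ^ 2 := by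
    intro x
    rw [hT', quad_sum_outer]
  have qD : ∀ x : Fin d → ℝ, |x ⬝ᵥ ((T' - S) *ᵥ x)| ≤ (2 * ε) * (x ⬝ᵥ x) := by
    intro x
    have hsplit : x ⬝ᵥ ((T' - S) *ᵥ x) = x ⬝ᵥ (T' *ᵥ x) - x ⬝ᵥ (S *ᵥ x) := by
      simp [Matrix.sub_mulVec, dotProduct_sub]
    have hN0 : 0 ≤ ∑ i, (max (μ i) 0 - μ i) * (w i ⬝ᵥ x) ^ 2 :=
      Finset.sum_nonneg fun i _ => mul_nonneg (by simp [le_max_iff]) (sq_nonneg _)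
    have hN2 : ∑ i, (max (μ i) 0 - μ i) * (w i ⬝ᵥ x) ^ 2 ≤ 2 * ε * (x ⬝ᵥ x) := by
      calc ∑ i, (max (μ i) 0 - μ i) * (w i ⬝ᵥ x) ^ 2
          ≤ ∑ i, 2 * ε * (w i ⬝ᵥ x) ^ 2 := by
            apply Finset.sum_le_sum
            intro i _
            apply mul_le_mul_of_nonneg_right _ (sq_nonneg _)
            have := hμlb i
            rcases le_or_gt (μ i) 0 with h | h
            · rw [max_eq_right h]; linarith
            · rw [max_eq_left h.le]; linarith
        _ = 2 * ε * (x ⬝ᵥ x) := by rw [← Finset.mul_sum, parseval w horth]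
    have hNsplit : ∑ i, (max (μ i) 0 - μ i) * (w i ⬝ᵥ x) ^ 2
        = x ⬝ᵥ (T' *ᵥ x) - ∑ i, μ i * (w i ⬝ᵥ x) ^ 2 := by
      rw [qT', ← Finset.sum_sub_distrib]
      congr 1; ext i; ring
    have hq := qdec x
    have hE1 := (abs_le.mp (qE x)).1
    have hE2 := (abs_le.mp (qE x)).2
    rw [abs_le]
    constructor
    · rw [hsplit]; nlinarith [hN0, hq, hE1]
    · rw [hsplit]; nlinarith [hN2, hq, hE2]
  have hSsym : S.IsSymm := isSymm_of_isHermitian hS.1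
  have hT'entry : ∀ a b, T' a b = ∑ i, max (μ i) 0 * (w i a * w i b) := by
    intro a b
    rw [hT']
    simp [Matrix.sum_apply, Matrix.smul_apply, vecMulVec_apply, smul_eq_mul]
  have hT'sym : T'.IsSymm := by
    ext a b
    rw [Matrix.transpose_apply, hT'entry, hT'entry]
    exact Finset.sum_congr rfl fun k _ => by ring
  have hDsym : (T' - S).IsSymm := by
    rw [Matrix.IsSymm, Matrix.transpose_sub, hT'sym.eq, hSsym.eq]
  have specD : specNorm (T' - S) ≤ 2 * ε :=
    specNorm_le_of_quad _ hDsym (by linarith) qD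
  -- rank bound
  set P : Finset (Fin d) := Finset.univ.filter (fun i => 0 < μ i) with hP
  have hrankT' : T'.rank ≤ P.card := by
    have hsub : LinearMap.range T'.mulVecLin ≤ Submodule.span ℝ (↑(P.image w)) := by
      rintro y ⟨x, rfl⟩
      rw [Matrix.mulVecLin_apply, hT', sum_mulVec']
      apply Submodule.sum_mem
      intro i _
      rw [Matrix.smul_mulVec, vecMulVec_mulVec']
      by_cases hi : 0 < μ i
      · refine Submodule.smul_mem _ _ (Submodule.smul_mem _ _ (Submodule.subset_span ?_))
        simp only [Finset.coe_image, Set.mem_image, Finset.mem_coe]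
        exact ⟨i, by simp [hP, hi], rfl⟩
      · have : max (μ i) 0 = 0 := max_eq_right (le_of_not_gt hi)
        rw [this]
        simp
    calc T'.rank ≤ Module.finrank ℝ ↥(Submodule.span ℝ (↑(P.image w))) :=
          Submodule.finrank_mono hsub
      _ ≤ (P.image w).card := by
          have h := finrank_span_le_card (R := ℝ) ((P.image w : Finset (Fin d → ℝ)) : Set (Fin d → ℝ))
          rwa [Finset.toFinset_coe] at h
      _ ≤ P.card := Finset.card_image_le
  have hcardP : P.card ≤ S.rank := by
    -- w is linearly independent
    have li : LinearIndependent ℝ w := by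
      rw [Fintype.linearIndependent_iff]
      intro g hg i
      have h := congrArg (fun v => w i ⬝ᵥ v) hg
      simp only [dot_sum', dotProduct_smul, smul_eq_mul, dotProduct_zero] at h
      simp only [horth, mul_ite, mul_one, mul_zero] at h
      simpa using h
    set u : {i // i ∈ P} → (Fin d → ℝ) := fun i => w i.1 with hu
    have liu : LinearIndependent ℝ u := li.comp Subtype.val Subtype.val_injective
    set V : Submodule ℝ (Fin d → ℝ) := Submodule.span ℝ (Set.range u) with hV
    have hdimV : Module.finrank ℝ V = P.card := by
      rw [hV, finrank_span_eq_card liu, Fintype.card_coe]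
    -- vectors in V are orthogonal to w j for j ∉ P
    have hVdot : ∀ x ∈ V, ∀ j, j ∉ P → w j ⬝ᵥ x = 0 := by
      intro x hx j hj
      induction hx using Submodule.span_induction with
      | mem y hy =>
        obtain ⟨i, rfl⟩ := hy
        have hne : j ≠ i.1 := fun h => hj (h ▸ i.2)
        simpa [hne] using horth j i.1
      | zero => simp
      | add y z _ _ hy hz => rw [dotProduct_add, hy, hz, add_zero]
      | smul c y _ hy => rw [dotProduct_smul, hy, smul_zero]
    -- S is injective on V
    have hinj : ∀ x ∈ V, S *ᵥ x = 0 → x = 0 := by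
      intro x hx hSx
      have hQS : x ⬝ᵥ (S *ᵥ x) = 0 := by rw [hSx, dotProduct_zero]
      have hq := qdec x
      have hE2 := (abs_le.mp (qE x)).2
      have hsum_le : ∑ i, μ i * (w i ⬝ᵥ x) ^ 2 ≤ 0 := by
        rw [hq, hQS]; linarith
      have hsum_eq : ∑ i ∈ P, μ i * (w i ⬝ᵥ x) ^ 2 = ∑ i, μ i * (w i ⬝ᵥ x) ^ 2 := by
        apply Finset.sum_subset (Finset.subset_univ P)
        intro j _ hj
        rw [hVdot x hx j hj]
        ring
      have hterm : ∀ i ∈ P, 0 ≤ μ i * (w i ⬝ᵥ x) ^ 2 := by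
        intro i hi
        have : 0 < μ i := (Finset.mem_filter.mp hi).2
        positivity
      have hall : ∀ i ∈ P, μ i * (w i ⬝ᵥ x) ^ 2 = 0 :=
        (Finset.sum_eq_zero_iff_of_nonneg hterm).mp
          (le_antisymm (hsum_eq ▸ hsum_le) (Finset.sum_nonneg hterm))
      have hzero : ∀ i, w i ⬝ᵥ x = 0 := by
        intro i
        by_cases hi : i ∈ P
        · have h1 := hall i hi
          have h2 : 0 < μ i := (Finset.mem_filter.mp hi).2
          have h3 : (w i ⬝ᵥ x) ^ 2 = 0 := by
            rcases mul_eq_zero.mp h1 with h | h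
            · exact absurd h h2.ne'
            · exact h
          exact (pow_eq_zero_iff two_ne_zero).mp h3
        · exact hVdot x hx i hi
      have : x ⬝ᵥ x = 0 := by
        rw [← parseval w horth x]
        exact Finset.sum_eq_zero fun i _ => by rw [hzero i]; ring
      exact dotProduct_self_eq_zero.mp this
    -- conclude
    have hker : ∀ y : V, S.mulVecLin.domRestrict V y = 0 → y = 0 := by
      rintro ⟨x, hx⟩ hy
      have : S *ᵥ x = 0 := by
        simpa [Matrix.mulVecLin_apply] using hy
      exact Subtype.ext (hinj x hx this)
    have hinj2 : Function.Injective (S.mulVecLin.domRestrict V) := by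
      rw [← LinearMap.ker_eq_bot, LinearMap.ker_eq_bot']
      intro y hy
      exact hker y hy
    have hrange : LinearMap.range (S.mulVecLin.domRestrict V) ≤ LinearMap.range S.mulVecLin := by
      rintro y ⟨x, rfl⟩
      exact LinearMap.mem_range_self _ _
    calc P.card = Module.finrank ℝ V := hdimV.symm
      _ = Module.finrank ℝ (LinearMap.range (S.mulVecLin.domRestrict V)) :=
          (LinearMap.finrank_range_of_inj hinj2).symm
      _ ≤ Module.finrank ℝ (LinearMap.range S.mulVecLin) := Submodule.finrank_mono hrange
      _ = S.rank := rfl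
  refine ⟨le_trans hrankT' (le_trans hcardP hrank), specD, ?_⟩
  -- Frobenius bound
  set D : Matrix (Fin d) (Fin d) ℝ := T' - S with hD
  have hDherm : D.IsHermitian := isHermitian_of_isSymm hDsym
  have hrankD : D.rank ≤ 2 * n := by
    have h1 := rank_sub_le' T' S
    rw [← hD] at h1
    have h2 : T'.rank ≤ n := le_trans hrankT' (le_trans hcardP hrank)
    omega
  have hsumsq := frob_sq_eq_sum_eig_sq D hDherm
  have habs : ∀ i, |hDherm.eigenvalues i| ≤ 2 * ε := fun i =>
    le_trans (eig_abs_le D hDherm i) specD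
  have hcard : (Finset.univ.filter (fun i => hDherm.eigenvalues i ≠ 0)).card ≤ 2 * n := by
    have := hDherm.rank_eq_card_non_zero_eigs
    rw [Fintype.card_subtype] at this
    omega
  have hsum_le : ∑ i, hDherm.eigenvalues i ^ 2 ≤ (2 * n) * (2 * ε) ^ 2 := by
    have heq : ∑ i, hDherm.eigenvalues i ^ 2
        = ∑ i ∈ Finset.univ.filter (fun i => hDherm.eigenvalues i ≠ 0),
            hDherm.eigenvalues i ^ 2 := by
      symm
      apply Finset.sum_subset (Finset.subset_univ _)
      intro j _ hj
      simp only [Finset.mem_filter, Finset.mem_univ, true_and, not_not] at hj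
      rw [hj]; ring
    rw [heq]
    calc ∑ i ∈ Finset.univ.filter (fun i => hDherm.eigenvalues i ≠ 0), hDherm.eigenvalues i ^ 2
        ≤ (Finset.univ.filter (fun i => hDherm.eigenvalues i ≠ 0)).card * (2 * ε) ^ 2 := by
          rw [← nsmul_eq_mul]
          apply Finset.sum_le_card_nsmul
          intro i _
          rw [← sq_abs]
          exact pow_le_pow_left₀ (abs_nonneg _) (habs i) 2
      _ ≤ (2 * n) * (2 * ε) ^ 2 := by
          apply mul_le_mul_of_nonneg_right _ (sq_nonneg _)
          exact_mod_cast hcard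
  rw [frobNorm]
  have hfin : ∑ i, ∑ j, D i j ^ 2 ≤ (2 * n) * (2 * ε) ^ 2 := by
    rw [hsumsq]; exact hsum_le
  calc Real.sqrt (∑ i, ∑ j, D i j ^ 2) ≤ Real.sqrt ((2 * n) * (2 * ε) ^ 2) :=
        Real.sqrt_le_sqrt hfin
    _ = 2 * ε * Real.sqrt (2 * n) := by
        rw [Real.sqrt_mul (by positivity), Real.sqrt_sq (by positivity)]
        ring
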